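/- For every λ ∈ (0, λ_max) there exists x ∈ (0, ∞) such that λ_eff(x) = λ. (In queueing terms: for every stable semi-open queueing network with backordering there is a lost-customers modification whose adjusted arrival rate x produces the same throughput λ.) -/

import Mathlib

open Finset

/-- `Cstb J η ν m` is the normalisation constant `C^stb(m)` of the stability network:
the sum over tuples `(n₁,…,n_J)` with `n₁+⋯+n_J = m` of `∏_j ∏_{i=1}^{n_j} η_j/ν_j(i)`. -/
noncomputable def Cstb (J : ℕ) (η : Fin J → ℝ) (ν : Fin J → ℕ → ℝ) (m : ℕ) : ℝ :=
  ∑ n ∈ Finset.Nat.antidiagonalTuple J m,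
    ∏ j, ∏ i ∈ Finset.range (n j), η j / ν j (i + 1)

/-- The effective arrival rate of the lost-customers modification with arrival rate `x`. -/
noncomputable def lamEff (J N : ℕ) (η0 : ℝ) (η : Fin J → ℝ) (ν : Fin J → ℕ → ℝ)
    (x : ℝ) : ℝ :=
  x * (1 - Cstb J η ν N /
    ∑ n0 ∈ Finset.range (N + 1), (η0 / x) ^ n0 * Cstb J η ν (N - n0))

lemma Cstb_pos (J : ℕ) (hJ : 1 ≤ J) (η : Fin J → ℝ) (hη : ∀ j, 0 < η j)
    (ν : Fin J → ℕ → ℝ) (hν : ∀ j i, 1 ≤ i → 0 < ν j i) (m : ℕ) :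
    0 < Cstb J η ν m := by
  unfold Cstb
  apply Finset.sum_pos
  · intro n _
    exact Finset.prod_pos fun j _ =>
      Finset.prod_pos fun i _ => div_pos (hη j) (hν j (i + 1) (by omega))
  · refine ⟨Pi.single ⟨0, hJ⟩ m, ?_⟩
    rw [Finset.Nat.mem_antidiagonalTuple]
    simp

noncomputable def gAux (J N : ℕ) (η0 : ℝ) (η : Fin J → ℝ) (ν : Fin J → ℕ → ℝ)
    (x : ℝ) : ℝ :=
  ∑ n0 ∈ Finset.range (N + 1), (η0 / x) ^ n0 * Cstb J η ν (N - n0)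

noncomputable def hAux (J N : ℕ) (η0 : ℝ) (η : Fin J → ℝ) (ν : Fin J → ℕ → ℝ)
    (x : ℝ) : ℝ :=
  ∑ k ∈ Finset.range N, (η0 / x) ^ k * Cstb J η ν (N - 1 - k)

lemma gAux_eq (J N : ℕ) (η0 : ℝ) (η : Fin J → ℝ) (ν : Fin J → ℕ → ℝ) (x : ℝ) :
    gAux J N η0 η ν x = η0 / x * hAux J N η0 η ν x + Cstb J η ν N := by
  unfold gAux hAux
  rw [Finset.sum_range_succ']
  rw [Finset.mul_sum]
  congr 1
  · apply Finset.sum_congr rfl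
    intro k _
    have h1 : N - (k + 1) = N - 1 - k := by omega
    rw [h1, pow_succ]
    ring
  · simp

lemma gAux_pos (J N : ℕ) (hJ : 1 ≤ J) (η0 : ℝ) (hη0 : 0 < η0)
    (η : Fin J → ℝ) (hη : ∀ j, 0 < η j)
    (ν : Fin J → ℕ → ℝ) (hν : ∀ j i, 1 ≤ i → 0 < ν j i)
    (x : ℝ) (hx : 0 < x) : 0 < gAux J N η0 η ν x := by
  unfold gAux
  apply Finset.sum_pos
  · intro n0 _
    exact mul_pos (pow_pos (div_pos hη0 hx) _) (Cstb_pos J hJ η hη ν hν _)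
  · exact ⟨0, Finset.mem_range.2 (by omega)⟩

lemma lamEff_eq (J N : ℕ) (hJ : 1 ≤ J) (η0 : ℝ) (hη0 : 0 < η0)
    (η : Fin J → ℝ) (hη : ∀ j, 0 < η j)
    (ν : Fin J → ℕ → ℝ) (hν : ∀ j i, 1 ≤ i → 0 < ν j i)
    (x : ℝ) (hx : 0 < x) :
    lamEff J N η0 η ν x = η0 * hAux J N η0 η ν x / gAux J N η0 η ν x := by
  have hg : gAux J N η0 η ν x ≠ 0 := (gAux_pos J N hJ η0 hη0 η hη ν hν x hx).ne'
  have hrw : lamEff J N η0 η ν x = x * (1 - Cstb J η ν N / gAux J N η0 η ν x) := rfl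
  rw [hrw, one_sub_div hg]
  rw [gAux_eq, add_sub_cancel_right, ← mul_div_assoc]
  congr 1
  field_simp

/-- For every `λ ∈ (0, λ_max)` there exists `x ∈ (0, ∞)` with `λ_eff(x) = λ`. -/
theorem exists_adjusted_arrival_rate
    (J N : ℕ) (hJ : 1 ≤ J) (hN : 1 ≤ N)
    (η0 : ℝ) (hη0 : 0 < η0)
    (η : Fin J → ℝ) (hη : ∀ j, 0 < η j)
    (ν : Fin J → ℕ → ℝ) (hν : ∀ j i, 1 ≤ i → 0 < ν j i)
    (lam : ℝ) (hlam0 : 0 < lam)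
    (hlam : lam < η0 * Cstb J η ν (N - 1) / Cstb J η ν N) :
    ∃ x : ℝ, 0 < x ∧ lamEff J N η0 η ν x = lam := by
  have hC : ∀ m, 0 < Cstb J η ν m := Cstb_pos J hJ η hη ν hν
  have hg : ∀ x : ℝ, 0 < x → 0 < gAux J N η0 η ν x :=
    gAux_pos J N hJ η0 hη0 η hη ν hν
  -- continuity of lamEff on (0, ∞)
  have hcont : ContinuousOn (lamEff J N η0 η ν) (Set.Ioi 0) := by
    unfold lamEff
    apply ContinuousOn.mul continuousOn_id
    apply ContinuousOn.sub continuousOn_const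
    apply ContinuousOn.div continuousOn_const
    · apply continuousOn_finset_sum
      intro n0 _
      exact ((continuousOn_const.div continuousOn_id
        (fun x hx => ne_of_gt hx)).pow _).mul continuousOn_const
    · intro x hx
      exact (hg x hx).ne'
  -- limit at infinity
  have hdiv : Filter.Tendsto (fun x : ℝ => η0 / x) Filter.atTop (nhds 0) :=
    Filter.Tendsto.div_atTop tendsto_const_nhds Filter.tendsto_id
  have hzsum : ∀ (M : ℕ) (c : ℕ → ℝ), 1 ≤ M →
      ∑ k ∈ Finset.range M, (0 : ℝ) ^ k * c k = c 0 := by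
    intro M c hM
    rw [Finset.sum_eq_single 0]
    · simp
    · intro k _ hk
      simp [zero_pow hk]
    · intro h
      exact absurd (Finset.mem_range.2 (by omega)) h
  have hh : Filter.Tendsto (hAux J N η0 η ν) Filter.atTop
      (nhds (Cstb J η ν (N - 1))) := by
    have := tendsto_finset_sum (Finset.range N)
      (fun k _ => ((hdiv.pow k).mul_const (Cstb J η ν (N - 1 - k))))
    show Filter.Tendsto (fun x => hAux J N η0 η ν x) _ _
    simpa [hAux, hzsum N (fun k => Cstb J η ν (N - 1 - k)) hN] using this
  have hgl : Filter.Tendsto (gAux J N η0 η ν) Filter.atTop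
      (nhds (Cstb J η ν N)) := by
    have := tendsto_finset_sum (Finset.range (N + 1))
      (fun k _ => ((hdiv.pow k).mul_const (Cstb J η ν (N - k))))
    show Filter.Tendsto (fun x => gAux J N η0 η ν x) _ _
    simpa [gAux, hzsum (N + 1) (fun k => Cstb J η ν (N - k)) (by omega)] using this
  have htend : Filter.Tendsto (fun x => η0 * hAux J N η0 η ν x / gAux J N η0 η ν x)
      Filter.atTop (nhds (η0 * Cstb J η ν (N - 1) / Cstb J η ν N)) :=
    ((hh.const_mul η0).div hgl (hC N).ne')
  -- choose b with lamEff b > lam and b ≥ lam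
  have hev : ∀ᶠ x in Filter.atTop, lam < η0 * hAux J N η0 η ν x / gAux J N η0 η ν x :=
    htend.eventually (eventually_gt_nhds hlam)
  obtain ⟨b, hb⟩ := (hev.and ((Filter.eventually_ge_atTop lam).and
    (Filter.eventually_gt_atTop 0))).exists
  obtain ⟨hb1, hb2, hb3⟩ := hb
  have hfb : lam < lamEff J N η0 η ν b := by
    rw [lamEff_eq J N hJ η0 hη0 η hη ν hν b hb3]
    exact hb1
  have hfa : lamEff J N η0 η ν lam < lam := by
    have h1 : lamEff J N η0 η ν lam
        = lam * (1 - Cstb J η ν N / gAux J N η0 η ν lam) := rfl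
    rw [h1]
    have h2 : 0 < Cstb J η ν N / gAux J N η0 η ν lam :=
      div_pos (hC N) (hg lam hlam0)
    nlinarith
  have hsub : Set.Icc lam b ⊆ Set.Ioi 0 := fun x hx => lt_of_lt_of_le hlam0 hx.1
  have := intermediate_value_Icc hb2 (hcont.mono hsub)
  obtain ⟨x, hx, hfx⟩ := this ⟨le_of_lt hfa, le_of_lt hfb⟩
  exact ⟨x, lt_of_lt_of_le hlam0 hx.1, hfx⟩
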